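/- If E is a (possibly non-finite) directed graph, R is an associative unital ring, G is a group, and L_R(E) is equipped with any standard G-gradation S = ⊕_{g∈G} S_g, then L_R(E) is nearly epsilon-strongly G-graded: for every g ∈ G and every s ∈ S_g it holds that s ∈ (S_g S_{g⁻¹}) s and s ∈ s (S_{g⁻¹} S_g). -/

import Mathlib

namespace LPA

/-- Generators of the Leavitt path algebra: a vertex `v`, a (real) edge `f`,
or a ghost edge `f*`. -/
inductive Gen (V Ed : Type*) : Type _
  | vertex : V → Gen V Ed
  | edge : Ed → Gen V Ed
  | ghost : Ed → Gen V Ed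

/-- The free `R`-ring on the generators, with `R` commuting with the generators. -/
abbrev FreeLPA (R V Ed : Type*) [Ring R] : Type _ := MonoidAlgebra R (FreeMonoid (Gen V Ed))

noncomputable def genF (R : Type*) [Ring R] {V Ed : Type*} (x : Gen V Ed) : FreeLPA R V Ed :=
  MonoidAlgebra.of R (FreeMonoid (Gen V Ed)) (FreeMonoid.of x)

/-- The defining relations of the Leavitt path algebra of the graph with vertices `V`,
edges `Ed`, source map `sf` and range map `rf`. -/
inductive Rel (R : Type*) [Ring R] {V Ed : Type*} (sf rf : Ed → V) :
    FreeLPA R V Ed → FreeLPA R V Ed → Prop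
  | vertex_eq (v : V) :
      Rel R sf rf (genF R (Gen.vertex v) * genF R (Gen.vertex v)) (genF R (Gen.vertex v))
  | vertex_ne {v w : V} (h : v ≠ w) :
      Rel R sf rf (genF R (Gen.vertex v) * genF R (Gen.vertex w)) 0
  | src_edge (f : Ed) :
      Rel R sf rf (genF R (Gen.vertex (sf f)) * genF R (Gen.edge f)) (genF R (Gen.edge f))
  | edge_rng (f : Ed) :
      Rel R sf rf (genF R (Gen.edge f) * genF R (Gen.vertex (rf f))) (genF R (Gen.edge f))
  | rng_ghost (f : Ed) :
      Rel R sf rf (genF R (Gen.vertex (rf f)) * genF R (Gen.ghost f)) (genF R (Gen.ghost f))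
  | ghost_src (f : Ed) :
      Rel R sf rf (genF R (Gen.ghost f) * genF R (Gen.vertex (sf f))) (genF R (Gen.ghost f))
  | ghost_edge_eq (f : Ed) :
      Rel R sf rf (genF R (Gen.ghost f) * genF R (Gen.edge f)) (genF R (Gen.vertex (rf f)))
  | ghost_edge_ne {f f' : Ed} (h : f ≠ f') :
      Rel R sf rf (genF R (Gen.ghost f) * genF R (Gen.edge f')) 0
  | cuntz_krieger (v : V) (h1 : {f : Ed | sf f = v}.Nonempty) (h2 : {f : Ed | sf f = v}.Finite) :
      Rel R sf rf (∑ f ∈ h2.toFinset, genF R (Gen.edge f) * genF R (Gen.ghost f))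
        (genF R (Gen.vertex v))

/-- The Leavitt path algebra `L_R(E)` (as the ambient unital quotient ring in which the
span of the monomials `α β*` is the Leavitt path algebra). -/
abbrev LeavittPathAlgebra (R : Type*) [Ring R] {V Ed : Type*} (sf rf : Ed → V) : Type _ :=
  RingQuot (Rel R sf rf)

noncomputable def gen (R : Type*) [Ring R] {V Ed : Type*} (sf rf : Ed → V) (x : Gen V Ed) :
    LeavittPathAlgebra R sf rf :=
  RingQuot.mkRingHom (Rel R sf rf) (genF R x)

noncomputable def ofR (R : Type*) [Ring R] {V Ed : Type*} (sf rf : Ed → V) (r : R) :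
    LeavittPathAlgebra R sf rf :=
  RingQuot.mkRingHom (Rel R sf rf) (MonoidAlgebra.single (1 : FreeMonoid (Gen V Ed)) r)

/-- Paths in the directed graph. `GPath sf rf u w` are the paths with source `u`
and range `w`; a vertex is a path of length `0`. -/
inductive GPath {V Ed : Type*} (sf rf : Ed → V) : V → V → Type _
  | nil (v : V) : GPath sf rf v v
  | cons (f : Ed) {w : V} (p : GPath sf rf (rf f) w) : GPath sf rf (sf f) w

namespace GPath

def length {V Ed : Type*} {sf rf : Ed → V} : {u w : V} → GPath sf rf u w → ℕ
  | _, _, nil _ => 0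
  | _, _, cons _ p => length p + 1

def edgeList {V Ed : Type*} {sf rf : Ed → V} : {u w : V} → GPath sf rf u w → List Ed
  | _, _, nil _ => []
  | _, _, cons f p => f :: edgeList p

/-- The degree of a path with respect to a degree map `dg : Ed → G`. -/
def degree {V Ed : Type*} {sf rf : Ed → V} {G : Type*} [Group G] (dg : Ed → G) :
    {u w : V} → GPath sf rf u w → G
  | _, _, nil _ => 1
  | _, _, cons f p => dg f * degree dg p

end GPath

/-- The element `α` of `L_R(E)` associated to a path `α` (a vertex if `α` has length 0). -/
noncomputable def realElem (R : Type*) [Ring R] {V Ed : Type*} (sf rf : Ed → V) :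
    {u w : V} → GPath sf rf u w → LeavittPathAlgebra R sf rf
  | _, _, .nil v => gen R sf rf (Gen.vertex v)
  | _, _, .cons f p => gen R sf rf (Gen.edge f) * realElem R sf rf p

/-- The element `α* = α_n* ⋯ α_1*` of `L_R(E)` associated to a path `α`. -/
noncomputable def ghostElem (R : Type*) [Ring R] {V Ed : Type*} (sf rf : Ed → V) :
    {u w : V} → GPath sf rf u w → LeavittPathAlgebra R sf rf
  | _, _, .nil v => gen R sf rf (Gen.vertex v)
  | _, _, .cons f p => ghostElem R sf rf p * gen R sf rf (Gen.ghost f)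

/-- The product `AB` of two additive subgroups of a ring: the additive subgroup
generated by all products `ab`, `a ∈ A`, `b ∈ B`. -/
def sgMul {A : Type*} [NonUnitalRing A] (B C : AddSubgroup A) : AddSubgroup A :=
  AddSubgroup.closure {x | ∃ b ∈ B, ∃ c ∈ C, x = b * c}

/-- The homogeneous component `S_g` of the standard `G`-gradation of `L_R(E)` attached
to the degree map `dg : Ed → G`: the `R`-span of the monomials `α β*` with
`r(α) = r(β)` and `deg α * (deg β)⁻¹ = g`. -/
noncomputable def component (R : Type*) [Ring R] {V Ed : Type*} (sf rf : Ed → V) {G : Type*} [Group G]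
    (dg : Ed → G) (g : G) : AddSubgroup (LeavittPathAlgebra R sf rf) :=
  AddSubgroup.closure
    {x | ∃ (r : R) (u u' w : V) (α : GPath sf rf u w) (β : GPath sf rf u' w),
      α.degree dg * (β.degree dg)⁻¹ = g ∧
      x = ofR R sf rf r * (realElem R sf rf α * ghostElem R sf rf β)}

/-- The homogeneous component `S_n` of the canonical `ℤ`-gradation of `L_R(E)`:
the `R`-span of the monomials `α β*` with `r(α) = r(β)` and `l(α) - l(β) = n`. -/
noncomputable def componentZ (R : Type*) [Ring R] {V Ed : Type*} (sf rf : Ed → V) (n : ℤ) :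
    AddSubgroup (LeavittPathAlgebra R sf rf) :=
  AddSubgroup.closure
    {x | ∃ (r : R) (u u' w : V) (α : GPath sf rf u w) (β : GPath sf rf u' w),
      (α.length : ℤ) - (β.length : ℤ) = n ∧
      x = ofR R sf rf r * (realElem R sf rf α * ghostElem R sf rf β)}

section Basic

variable (R : Type*) [Ring R] {V Ed : Type*} (sf rf : Ed → V)

lemma mk_rel {a b : FreeLPA R V Ed} (h : Rel R sf rf a b) :
    RingQuot.mkRingHom (Rel R sf rf) a = RingQuot.mkRingHom (Rel R sf rf) b :=
  RingQuot.mkRingHom_rel h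

lemma gen_mul (x y : Gen V Ed) : gen R sf rf x * gen R sf rf y
    = RingQuot.mkRingHom (Rel R sf rf) (genF R x * genF R y) :=
  (map_mul (RingQuot.mkRingHom (Rel R sf rf)) _ _).symm

lemma vertex_mul_self (v : V) :
    gen R sf rf (.vertex v) * gen R sf rf (.vertex v) = gen R sf rf (.vertex v) := by
  rw [gen_mul]; exact mk_rel R sf rf (Rel.vertex_eq v)

lemma vertex_mul_ne {v w : V} (h : v ≠ w) :
    gen R sf rf (.vertex v) * gen R sf rf (.vertex w) = 0 := by
  rw [gen_mul, mk_rel R sf rf (Rel.vertex_ne h), map_zero]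

lemma vertex_mul_edge (f : Ed) :
    gen R sf rf (.vertex (sf f)) * gen R sf rf (.edge f) = gen R sf rf (.edge f) := by
  rw [gen_mul]; exact mk_rel R sf rf (Rel.src_edge f)

lemma edge_mul_vertex (f : Ed) :
    gen R sf rf (.edge f) * gen R sf rf (.vertex (rf f)) = gen R sf rf (.edge f) := by
  rw [gen_mul]; exact mk_rel R sf rf (Rel.edge_rng f)

lemma vertex_mul_ghost' (f : Ed) :
    gen R sf rf (.vertex (rf f)) * gen R sf rf (.ghost f) = gen R sf rf (.ghost f) := by
  rw [gen_mul]; exact mk_rel R sf rf (Rel.rng_ghost f)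

lemma ghost_mul_vertex' (f : Ed) :
    gen R sf rf (.ghost f) * gen R sf rf (.vertex (sf f)) = gen R sf rf (.ghost f) := by
  rw [gen_mul]; exact mk_rel R sf rf (Rel.ghost_src f)

lemma ghost_mul_edge_self (f : Ed) :
    gen R sf rf (.ghost f) * gen R sf rf (.edge f) = gen R sf rf (.vertex (rf f)) := by
  rw [gen_mul]; exact mk_rel R sf rf (Rel.ghost_edge_eq f)

lemma ghost_mul_edge_ne {f f' : Ed} (h : f ≠ f') :
    gen R sf rf (.ghost f) * gen R sf rf (.edge f') = 0 := by
  rw [gen_mul, mk_rel R sf rf (Rel.ghost_edge_ne h), map_zero]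

/-- `v • f = 0` when `v ≠ s(f)`. -/
lemma vertex_mul_edge_ne {v : V} {f : Ed} (h : v ≠ sf f) :
    gen R sf rf (.vertex v) * gen R sf rf (.edge f) = 0 := by
  rw [← vertex_mul_edge R sf rf f, ← mul_assoc, vertex_mul_ne R sf rf h, zero_mul]

/-- `f* • v = 0` when `v ≠ s(f)`. -/
lemma ghost_mul_vertex_ne' {v : V} {f : Ed} (h : v ≠ sf f) :
    gen R sf rf (.ghost f) * gen R sf rf (.vertex v) = 0 := by
  rw [← ghost_mul_vertex' R sf rf f, mul_assoc, vertex_mul_ne R sf rf (Ne.symm h), mul_zero]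

lemma ofR_comm_gen (r : R) (x : Gen V Ed) :
    ofR R sf rf r * gen R sf rf x = gen R sf rf x * ofR R sf rf r := by
  unfold ofR gen genF
  rw [← map_mul, ← map_mul]
  congr 1
  simp [MonoidAlgebra.of_apply, MonoidAlgebra.single_mul_single]

lemma ofR_one : ofR R sf rf (1 : R) = 1 := by
  unfold ofR
  rw [← MonoidAlgebra.one_def, map_one]

end Basic
namespace GPath

/-- Concatenation of paths. -/
def append {V Ed : Type*} {sf rf : Ed → V} :
    {u w w' : V} → GPath sf rf u w → GPath sf rf w w' → GPath sf rf u w'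
  | _, _, _, .nil _, q => q
  | _, _, _, .cons f p, q => .cons f (p.append q)

lemma degree_append {V Ed : Type*} {sf rf : Ed → V} {G : Type*} [Group G] (dg : Ed → G)
    {u w w' : V} (p : GPath sf rf u w) (q : GPath sf rf w w') :
    (p.append q).degree dg = p.degree dg * q.degree dg := by
  induction p with
  | nil v => simp [append, degree]
  | cons f p ih => simp only [append, degree, ih, mul_assoc]

end GPath

section Paths

variable (R : Type*) [Ring R] {V Ed : Type*} (sf rf : Ed → V)

lemma vertex_mul_real {u w : V} (p : GPath sf rf u w) :
    gen R sf rf (.vertex u) * realElem R sf rf p = realElem R sf rf p := by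
  induction p with
  | nil v => exact vertex_mul_self R sf rf v
  | cons f p ih => rw [realElem, ← mul_assoc, vertex_mul_edge]

lemma vertex_ne_mul_real {u w v : V} (h : v ≠ u) (p : GPath sf rf u w) :
    gen R sf rf (.vertex v) * realElem R sf rf p = 0 := by
  cases p with
  | nil => exact vertex_mul_ne R sf rf h
  | cons f p => rw [realElem, ← mul_assoc, vertex_mul_edge_ne R sf rf h, zero_mul]

lemma real_mul_vertex {u w : V} (p : GPath sf rf u w) :
    realElem R sf rf p * gen R sf rf (.vertex w) = realElem R sf rf p := by
  induction p with
  | nil v => exact vertex_mul_self R sf rf v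
  | cons f p ih => rw [realElem, mul_assoc, ih]

lemma ghost_mul_vertex {u w : V} (p : GPath sf rf u w) :
    ghostElem R sf rf p * gen R sf rf (.vertex u) = ghostElem R sf rf p := by
  cases p with
  | nil => exact vertex_mul_self R sf rf _
  | cons f p => rw [ghostElem, mul_assoc, ghost_mul_vertex']

lemma ghost_mul_vertex_ne {u w v : V} (h : v ≠ u) (p : GPath sf rf u w) :
    ghostElem R sf rf p * gen R sf rf (.vertex v) = 0 := by
  cases p with
  | nil => exact vertex_mul_ne R sf rf (Ne.symm h)
  | cons f p => rw [ghostElem, mul_assoc, ghost_mul_vertex_ne' R sf rf h, mul_zero]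

lemma vertex_mul_ghost {u w : V} (p : GPath sf rf u w) :
    gen R sf rf (.vertex w) * ghostElem R sf rf p = ghostElem R sf rf p := by
  induction p with
  | nil v => exact vertex_mul_self R sf rf v
  | cons f p ih => rw [ghostElem, ← mul_assoc, ih]

lemma ghost_mul_real_self {u w : V} (p : GPath sf rf u w) :
    ghostElem R sf rf p * realElem R sf rf p = gen R sf rf (.vertex w) := by
  induction p with
  | nil v => exact vertex_mul_self R sf rf v
  | cons f p ih =>
    rw [ghostElem, realElem, mul_assoc, ← mul_assoc (gen R sf rf (.ghost f)),
      ghost_mul_edge_self, vertex_mul_real, ih]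

lemma real_append {u w w' : V} (p : GPath sf rf u w) (q : GPath sf rf w w') :
    realElem R sf rf (p.append q) = realElem R sf rf p * realElem R sf rf q := by
  induction p with
  | nil v => rw [GPath.append, realElem, vertex_mul_real]
  | cons f p ih => rw [GPath.append, realElem, realElem, ih, mul_assoc]

lemma ghost_append {u w w' : V} (p : GPath sf rf u w) (q : GPath sf rf w w') :
    ghostElem R sf rf (p.append q) = ghostElem R sf rf q * ghostElem R sf rf p := by
  induction p with
  | nil v => rw [GPath.append, ghostElem, ghost_mul_vertex]
  | cons f p ih => rw [GPath.append, ghostElem, ghostElem, ih, mul_assoc]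

lemma ofR_comm_real {u w : V} (r : R) (p : GPath sf rf u w) :
    ofR R sf rf r * realElem R sf rf p = realElem R sf rf p * ofR R sf rf r := by
  induction p with
  | nil v => exact ofR_comm_gen R sf rf r _
  | cons f p ih =>
    rw [realElem, ← mul_assoc, ofR_comm_gen, mul_assoc, ih, mul_assoc]

lemma ofR_comm_ghost {u w : V} (r : R) (p : GPath sf rf u w) :
    ofR R sf rf r * ghostElem R sf rf p = ghostElem R sf rf p * ofR R sf rf r := by
  induction p with
  | nil v => exact ofR_comm_gen R sf rf r _
  | cons f p ih =>
    rw [ghostElem, ← mul_assoc, ih, mul_assoc, ofR_comm_gen, mul_assoc]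

/-- The key trichotomy: for paths `γ, γ₂`, either `γ* γ₂ = 0` (and `γ₂* γ = 0`),
or `γ₂ = γ δ`, or `γ = γ₂ δ`. -/
lemma key {u w : V} (γ : GPath sf rf u w) :
    ∀ {u₂ w₂ : V} (γ₂ : GPath sf rf u₂ w₂),
    (ghostElem R sf rf γ * realElem R sf rf γ₂ = 0 ∧
     ghostElem R sf rf γ₂ * realElem R sf rf γ = 0) ∨
    (∃ δ : GPath sf rf w w₂,
       ghostElem R sf rf γ * realElem R sf rf γ₂ = realElem R sf rf δ ∧
       ghostElem R sf rf γ₂ * realElem R sf rf γ = ghostElem R sf rf δ ∧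
       realElem R sf rf γ₂ = realElem R sf rf γ * realElem R sf rf δ ∧
       ghostElem R sf rf γ₂ = ghostElem R sf rf δ * ghostElem R sf rf γ) ∨
    (∃ δ : GPath sf rf w₂ w,
       ghostElem R sf rf γ * realElem R sf rf γ₂ = ghostElem R sf rf δ ∧
       ghostElem R sf rf γ₂ * realElem R sf rf γ = realElem R sf rf δ ∧
       realElem R sf rf γ = realElem R sf rf γ₂ * realElem R sf rf δ ∧
       ghostElem R sf rf γ = ghostElem R sf rf δ * ghostElem R sf rf γ₂) := by
  induction γ with
  | nil v =>
    intro u₂ w₂ γ₂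
    by_cases h : v = u₂
    · subst h
      refine Or.inr (Or.inl ⟨γ₂, ?_, ?_, ?_, ?_⟩)
      · exact vertex_mul_real R sf rf γ₂
      · exact ghost_mul_vertex R sf rf γ₂
      · exact (vertex_mul_real R sf rf γ₂).symm
      · exact (ghost_mul_vertex R sf rf γ₂).symm
    · exact Or.inl ⟨vertex_ne_mul_real R sf rf h γ₂,
        ghost_mul_vertex_ne R sf rf h γ₂⟩
  | cons f p ih =>
    intro u₂ w₂ γ₂
    cases γ₂ with
    | nil =>
      by_cases h : u₂ = sf f
      · subst h
        refine Or.inr (Or.inr ⟨.cons f p, ?_, ?_, ?_, ?_⟩)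
        · exact ghost_mul_vertex R sf rf _
        · exact vertex_mul_real R sf rf _
        · exact (vertex_mul_real R sf rf _).symm
        · exact (ghost_mul_vertex R sf rf _).symm
      · exact Or.inl ⟨ghost_mul_vertex_ne R sf rf h _,
          vertex_ne_mul_real R sf rf h _⟩
    | @cons f₂ w₂' p₂ =>
      by_cases h : f = f₂
      · subst h
        have e1 : ghostElem R sf rf (GPath.cons f p) * realElem R sf rf (GPath.cons f p₂)
            = ghostElem R sf rf p * realElem R sf rf p₂ := by
          rw [ghostElem, realElem, mul_assoc, ← mul_assoc (gen R sf rf (.ghost f)),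
            ghost_mul_edge_self, vertex_mul_real]
        have e2 : ghostElem R sf rf (GPath.cons f p₂) * realElem R sf rf (GPath.cons f p)
            = ghostElem R sf rf p₂ * realElem R sf rf p := by
          rw [ghostElem, realElem, mul_assoc, ← mul_assoc (gen R sf rf (.ghost f)),
            ghost_mul_edge_self, vertex_mul_real]
        rcases ih p₂ with ⟨h1, h2⟩ | ⟨δ, h1, h2, h3, h4⟩ | ⟨δ, h1, h2, h3, h4⟩
        · exact Or.inl ⟨e1.trans h1, e2.trans h2⟩
        · refine Or.inr (Or.inl ⟨δ, e1.trans h1, e2.trans h2, ?_, ?_⟩)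
          · rw [realElem, realElem, h3, mul_assoc]
          · rw [ghostElem, ghostElem, h4, mul_assoc]
        · refine Or.inr (Or.inr ⟨δ, e1.trans h1, e2.trans h2, ?_, ?_⟩)
          · rw [realElem, realElem, h3, mul_assoc]
          · rw [ghostElem, ghostElem, h4, mul_assoc]
      · refine Or.inl ⟨?_, ?_⟩
        · rw [ghostElem, realElem, mul_assoc, ← mul_assoc (gen R sf rf (.ghost f)),
            ghost_mul_edge_ne R sf rf h, zero_mul, mul_zero]
        · rw [ghostElem, realElem, mul_assoc, ← mul_assoc (gen R sf rf (.ghost f₂)),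
            ghost_mul_edge_ne R sf rf (Ne.symm h), zero_mul, mul_zero]

end Paths
section Proj

variable (R : Type*) [Ring R] {V Ed : Type*} (sf rf : Ed → V) {G : Type*} [Group G] (dg : Ed → G)

/-- Projections `γ γ*` where `γ = α δ` for some `g`-admissible pair `(α, β)`. -/
def ProjSet (g : G) : Set (LeavittPathAlgebra R sf rf) :=
  {x | ∃ (u u' w w₂ : V) (α : GPath sf rf u w) (β : GPath sf rf u' w) (δ : GPath sf rf w w₂),
    α.degree dg * (β.degree dg)⁻¹ = g ∧
    x = realElem R sf rf (α.append δ) * ghostElem R sf rf (α.append δ)}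

private lemma assoc4 {A : Type*} [Ring A] (a b c d : A) : a * b * (c * d) = a * (b * c * d) := by
  rw [mul_assoc, mul_assoc]

lemma projSet_subset (g : G) :
    ProjSet R sf rf dg g ⊆
      ↑(sgMul (component R sf rf dg g) (component R sf rf dg g⁻¹)) := by
  rintro x ⟨u, u', w, w₂, α, β, δ, hdeg, rfl⟩
  have ha : realElem R sf rf α * ghostElem R sf rf β ∈ component R sf rf dg g :=
    AddSubgroup.subset_closure ⟨1, u, u', w, α, β, hdeg, by rw [ofR_one, one_mul]⟩
  have hb : realElem R sf rf (β.append δ) * ghostElem R sf rf (α.append δ)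
      ∈ component R sf rf dg g⁻¹ := by
    refine AddSubgroup.subset_closure ⟨1, u', u, w₂, β.append δ, α.append δ, ?_,
      by rw [ofR_one, one_mul]⟩
    rw [GPath.degree_append, GPath.degree_append, ← hdeg]
    group
  refine AddSubgroup.subset_closure ⟨_, ha, _, hb, ?_⟩
  rw [real_append R sf rf β δ, assoc4, ← mul_assoc (ghostElem R sf rf β),
    ghost_mul_real_self, vertex_mul_real, real_append R sf rf α δ, mul_assoc]

/-- Any two projections commute, and their product is `0` or again a projection. -/
lemma projSet_mul (g : G) {x y : LeavittPathAlgebra R sf rf}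
    (hx : x ∈ ProjSet R sf rf dg g) (hy : y ∈ ProjSet R sf rf dg g) :
    x * y = y * x ∧ (x * y = 0 ∨ x * y ∈ ProjSet R sf rf dg g) := by
  obtain ⟨u₁, u₁', w₁, w₁₂, α₁, β₁, δ₁, hdeg₁, rfl⟩ := hx
  obtain ⟨u₂, u₂', w₂, w₂₂, α₂, β₂, δ₂, hdeg₂, rfl⟩ := hy
  set Γ₁ := α₁.append δ₁ with hΓ₁
  set Γ₂ := α₂.append δ₂ with hΓ₂
  rcases key R sf rf Γ₁ Γ₂ with ⟨h1, h2⟩ | ⟨δ, h1, h2, h3, h4⟩ | ⟨δ, h1, h2, h3, h4⟩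
  · constructor
    · rw [assoc4, h1, assoc4, h2, zero_mul, mul_zero, zero_mul, mul_zero]
    · left; rw [assoc4, h1, zero_mul, mul_zero]
  · have e1 : realElem R sf rf Γ₁ * ghostElem R sf rf Γ₁ *
        (realElem R sf rf Γ₂ * ghostElem R sf rf Γ₂)
        = realElem R sf rf Γ₂ * ghostElem R sf rf Γ₂ := by
      rw [assoc4, h1, ← mul_assoc, ← h3]
    have e2 : realElem R sf rf Γ₂ * ghostElem R sf rf Γ₂ *
        (realElem R sf rf Γ₁ * ghostElem R sf rf Γ₁)
        = realElem R sf rf Γ₂ * ghostElem R sf rf Γ₂ := by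
      rw [assoc4, h2, ← h4]
    refine ⟨e1.trans e2.symm, Or.inr ?_⟩
    rw [e1]
    exact ⟨u₂, u₂', w₂, w₂₂, α₂, β₂, δ₂, hdeg₂, rfl⟩
  · have e1 : realElem R sf rf Γ₁ * ghostElem R sf rf Γ₁ *
        (realElem R sf rf Γ₂ * ghostElem R sf rf Γ₂)
        = realElem R sf rf Γ₁ * ghostElem R sf rf Γ₁ := by
      rw [assoc4, h1, ← h4]
    have e2 : realElem R sf rf Γ₂ * ghostElem R sf rf Γ₂ *
        (realElem R sf rf Γ₁ * ghostElem R sf rf Γ₁)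
        = realElem R sf rf Γ₁ * ghostElem R sf rf Γ₁ := by
      rw [assoc4, h2, ← mul_assoc, ← h3]
    refine ⟨e1.trans e2.symm, Or.inr ?_⟩
    rw [e1]
    exact ⟨u₁, u₁', w₁, w₁₂, α₁, β₁, δ₁, hdeg₁, rfl⟩

lemma mem_H_comm (g : G) {h p : LeavittPathAlgebra R sf rf}
    (hh : h ∈ AddSubgroup.closure (ProjSet R sf rf dg g))
    (hp : p ∈ ProjSet R sf rf dg g) : h * p = p * h := by
  induction hh using AddSubgroup.closure_induction with
  | mem x hx => exact (projSet_mul R sf rf dg g hx hp).1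
  | zero => rw [zero_mul, mul_zero]
  | add x y _ _ ihx ihy => rw [add_mul, mul_add, ihx, ihy]
  | neg x _ ihx =>
    have e1 : -x * p = -(x * p) := neg_mul x p
    have e2 : p * -x = -(p * x) := mul_neg p x
    rw [e1, e2, ihx]

lemma H_mul_H (g : G) {a b : LeavittPathAlgebra R sf rf}
    (ha : a ∈ AddSubgroup.closure (ProjSet R sf rf dg g))
    (hb : b ∈ AddSubgroup.closure (ProjSet R sf rf dg g)) :
    a * b ∈ AddSubgroup.closure (ProjSet R sf rf dg g) := by
  induction ha using AddSubgroup.closure_induction with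
  | mem x hx =>
    induction hb using AddSubgroup.closure_induction with
    | mem y hy =>
      rcases (projSet_mul R sf rf dg g hx hy).2 with h0 | hmem
      · rw [h0]; exact zero_mem _
      · exact AddSubgroup.subset_closure hmem
    | zero => rw [mul_zero]; exact zero_mem _
    | add y z hy hz ihy ihz => rw [mul_add]; exact add_mem ihy ihz
    | neg y hy ihy =>
      have e : x * -y = -(x * y) := mul_neg x y
      rw [e]; exact neg_mem ihy
  | zero => rw [zero_mul]; exact zero_mem _
  | add x y hx hy ihx ihy => rw [add_mul]; exact add_mem ihx ihy
  | neg x hx ihx =>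
    have e : -x * b = -(x * b) := neg_mul x b
    rw [e]; exact neg_mem ihx

end Proj
section Main

variable (R : Type*) [Ring R] {V Ed : Type*} (sf rf : Ed → V) {G : Type*} [Group G] (dg : Ed → G)

lemma left_fix (g : G) {s : LeavittPathAlgebra R sf rf}
    (hs : s ∈ component R sf rf dg g) :
    ∃ ε ∈ AddSubgroup.closure (ProjSet R sf rf dg g), ε * s = s := by
  induction hs using AddSubgroup.closure_induction with
  | mem x hx =>
    obtain ⟨r, u, u', w, α, β, hdeg, rfl⟩ := hx
    refine ⟨realElem R sf rf α * ghostElem R sf rf α,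
      AddSubgroup.subset_closure ⟨u, u', w, w, α, β, .nil w, hdeg, ?_⟩, ?_⟩
    · rw [real_append, ghost_append]
      simp only [realElem, ghostElem]
      rw [real_mul_vertex, vertex_mul_ghost]
    · have hofR : realElem R sf rf α * ghostElem R sf rf α * ofR R sf rf r
          = ofR R sf rf r * (realElem R sf rf α * ghostElem R sf rf α) := by
        rw [mul_assoc, ← ofR_comm_ghost, ← mul_assoc, ← ofR_comm_real, mul_assoc]
      rw [← mul_assoc, hofR, mul_assoc, assoc4, ghost_mul_real_self, vertex_mul_ghost]
  | zero => exact ⟨0, zero_mem _, mul_zero 0⟩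
  | add a b ha hb iha ihb =>
    obtain ⟨εa, hεa, fa⟩ := iha
    obtain ⟨εb, hεb, fb⟩ := ihb
    have habs : ∀ y ∈ AddSubgroup.closure (ProjSet R sf rf dg g), εa * (y * a) = y * a := by
      intro y hy
      induction hy using AddSubgroup.closure_induction with
      | mem p hp => rw [← mul_assoc, mem_H_comm R sf rf dg g hεa hp, mul_assoc, fa]
      | zero => rw [zero_mul, mul_zero]
      | add y z _ _ ihy ihz => rw [add_mul, mul_add, ihy, ihz]
      | neg y _ ihy =>
        have e1 : -y * a = -(y * a) := neg_mul y a
        have e2 : εa * -(y * a) = -(εa * (y * a)) := by exact mul_neg εa (y * a)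
        rw [e1, e2, ihy]
    refine ⟨εa + εb - εa * εb,
      sub_mem (add_mem hεa hεb) (H_mul_H R sf rf dg g hεa hεb), ?_⟩
    have ea : (εa + εb - εa * εb) * a = a := by
      rw [sub_mul, add_mul, fa, mul_assoc, habs εb hεb, add_sub_cancel_right]
    have eb : (εa + εb - εa * εb) * b = b := by
      rw [sub_mul, add_mul, mul_assoc, fb, add_sub_cancel_left]
    rw [mul_add, ea, eb]
  | neg x _ ihx =>
    obtain ⟨ε, hε, fx⟩ := ihx
    refine ⟨ε, hε, ?_⟩
    have e : ε * -x = -(ε * x) := mul_neg ε x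
    rw [e, fx]

lemma right_fix (g : G) {s : LeavittPathAlgebra R sf rf}
    (hs : s ∈ component R sf rf dg g) :
    ∃ ε ∈ AddSubgroup.closure (ProjSet R sf rf dg g⁻¹), s * ε = s := by
  induction hs using AddSubgroup.closure_induction with
  | mem x hx =>
    obtain ⟨r, u, u', w, α, β, hdeg, rfl⟩ := hx
    refine ⟨realElem R sf rf β * ghostElem R sf rf β,
      AddSubgroup.subset_closure ⟨u', u, w, w, β, α, .nil w, ?_, ?_⟩, ?_⟩
    · rw [← hdeg]; group
    · rw [real_append, ghost_append]
      simp only [realElem, ghostElem]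
      rw [real_mul_vertex, vertex_mul_ghost]
    · rw [mul_assoc, assoc4, ghost_mul_real_self, vertex_mul_ghost]
  | zero => exact ⟨0, zero_mem _, zero_mul 0⟩
  | add a b ha hb iha ihb =>
    obtain ⟨εa, hεa, fa⟩ := iha
    obtain ⟨εb, hεb, fb⟩ := ihb
    have habs : ∀ y ∈ AddSubgroup.closure (ProjSet R sf rf dg g⁻¹),
        (a * y) * εa = a * y := by
      intro y hy
      induction hy using AddSubgroup.closure_induction with
      | mem p hp => rw [mul_assoc, ← mem_H_comm R sf rf dg g⁻¹ hεa hp, ← mul_assoc, fa]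
      | zero => rw [mul_zero, zero_mul]
      | add y z _ _ ihy ihz => rw [mul_add, add_mul, ihy, ihz]
      | neg y _ ihy =>
        have e1 : a * -y = -(a * y) := mul_neg a y
        have e2 : -(a * y) * εa = -((a * y) * εa) := by exact neg_mul (a * y) εa
        rw [e1, e2, ihy]
    refine ⟨εa + εb - εb * εa,
      sub_mem (add_mem hεa hεb) (H_mul_H R sf rf dg g⁻¹ hεb hεa), ?_⟩
    have ea : a * (εa + εb - εb * εa) = a := by
      rw [mul_sub, mul_add, fa, ← mul_assoc, habs εb hεb, add_sub_cancel_right]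
    have eb : b * (εa + εb - εb * εa) = b := by
      rw [mul_sub, mul_add, ← mul_assoc, fb, add_sub_cancel_left]
    rw [add_mul, ea, eb]
  | neg x _ ihx =>
    obtain ⟨ε, hε, fx⟩ := ihx
    refine ⟨ε, hε, ?_⟩
    have e : -x * ε = -(x * ε) := neg_mul x ε
    rw [e, fx]

end Main

end LPA

open LPA in
/-- If `E` is a (possibly non-finite) directed graph, `R` an associative
unital ring and `G` a group, then `L_R(E)`, with any standard `G`-gradation, is nearly
epsilon-strongly `G`-graded: for every `g ∈ G` and every `s ∈ S_g` one has
`s ∈ (S_g S_{g⁻¹}) s` and `s ∈ s (S_{g⁻¹} S_g)`. -/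
theorem leavitt_nearlyEpsilonStrongly (R : Type*) [Ring R] {V Ed : Type*}
    (sf rf : Ed → V) {G : Type*} [Group G] (dg : Ed → G) :
    ∀ g : G, ∀ s ∈ component R sf rf dg g,
      (∃ t ∈ sgMul (component R sf rf dg g) (component R sf rf dg g⁻¹), t * s = s) ∧
      (∃ t ∈ sgMul (component R sf rf dg g⁻¹) (component R sf rf dg g), s * t = s) := by
  intro g s hs
  constructor
  · obtain ⟨ε, hεH, hfix⟩ := left_fix R sf rf dg g hs
    exact ⟨ε, (AddSubgroup.closure_le _).mpr (projSet_subset R sf rf dg g) hεH, hfix⟩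
  · obtain ⟨ε, hεH, hfix⟩ := right_fix R sf rf dg g hs
    refine ⟨ε, ?_, hfix⟩
    have hsub : ε ∈ sgMul (component R sf rf dg g⁻¹) (component R sf rf dg g⁻¹⁻¹) :=
      (AddSubgroup.closure_le _).mpr (projSet_subset R sf rf dg g⁻¹) hεH
    rw [inv_inv] at hsub
    exact hsub
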